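/- A partition maximizing the lexicographic order of the non-increasingly sorted utility sequence over all partitions of the agents is Pareto optimal, core stable, and individually stable. -/

import Mathlib

/-- A partition of the agents of type `α`, given as the map sending each agent to her
coalition: every agent belongs to her own coalition, and the coalitions are consistent. -/
def IsPartitionFn {α : Type*} [DecidableEq α] (C : α → Finset α) : Prop :=
  (∀ i, i ∈ C i) ∧ ∀ i j, i ∈ C j → C i = C j

/-- The social welfare of a partition: the sum of the agents' utilities. -/
noncomputable def welfare {α : Type*} [Fintype α] (U : Finset α → ℝ) (C : α → Finset α) : ℝ :=
  ∑ i, U (C i)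

/-- `C'` Pareto dominates `C`. -/
def ParetoDominates {α : Type*} (U : Finset α → ℝ) (C C' : α → Finset α) : Prop :=
  (∀ i, U (C i) ≤ U (C' i)) ∧ ∃ i, U (C i) < U (C' i)

/-- No partition Pareto dominates `C`. -/
def ParetoOptimal {α : Type*} [DecidableEq α] (U : Finset α → ℝ) (C : α → Finset α) : Prop :=
  ¬ ∃ C', IsPartitionFn C' ∧ ParetoDominates U C C'

/-- No nonempty coalition blocks `C`. -/
def CoreStable {α : Type*} (U : Finset α → ℝ) (C : α → Finset α) : Prop :=
  ¬ ∃ S : Finset α, S.Nonempty ∧ ∀ i ∈ S, U (C i) < U S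

/-- No agent can beneficially move to an existing (possibly empty) coalition without
making the members of that coalition worse off. -/
def IndividuallyStable {α : Type*} [DecidableEq α] (U : Finset α → ℝ) (C : α → Finset α) : Prop :=
  ¬ ∃ i T, i ∉ T ∧ (T = ∅ ∨ ((∃ j, C j = T) ∧ U T ≤ U (insert i T))) ∧
    U (C i) < U (insert i T)

/-- No agent can beneficially move to an existing (possibly empty) coalition. -/
def NashStable {α : Type*} [DecidableEq α] (U : Finset α → ℝ) (C : α → Finset α) : Prop :=
  ¬ ∃ i T, i ∉ T ∧ (T = ∅ ∨ ∃ j, C j = T) ∧ U (C i) < U (insert i T)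

/-- The sequence of the agents' utilities in partition `C`, sorted in non-increasing order. -/
noncomputable def psi {α : Type*} [Fintype α] (U : Finset α → ℝ) (C : α → Finset α) : List ℝ :=
  (Finset.univ.val.map fun i => U (C i)).sort (· ≥ ·)

lemma psi_sorted {α : Type*} [Fintype α] (U : Finset α → ℝ) (C : α → Finset α) :
    (psi U C).Pairwise (· ≥ ·) := Multiset.pairwise_sort _ _

lemma psi_length {α : Type*} [Fintype α] (U : Finset α → ℝ) (C : α → Finset α) :
    (psi U C).length = Fintype.card α := by
  simp [psi, Multiset.length_sort]

lemma psi_countP {α : Type*} [Fintype α] (U : Finset α → ℝ) (C : α → Finset α) (t : ℝ) :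
    (psi U C).countP (fun x => decide (t ≤ x)) =
      (Finset.univ.filter (fun i => t ≤ U (C i))).card := by
  rw [← Multiset.coe_countP]
  rw [show ((psi U C : List ℝ) : Multiset ℝ) = Finset.univ.val.map fun i => U (C i) from
    Multiset.sort_eq _ _]
  rw [Multiset.countP_map]
  rfl

lemma psi_sum {α : Type*} [Fintype α] (U : Finset α → ℝ) (C : α → Finset α) :
    (psi U C).sum = ∑ i, U (C i) := by
  rw [← Multiset.sum_coe]
  rw [show ((psi U C : List ℝ) : Multiset ℝ) = Finset.univ.val.map fun i => U (C i) from
    Multiset.sort_eq _ _]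
  rfl

lemma lexR (t₀ : ℝ) : ∀ (L M : List ℝ), L.length = M.length →
    L.Pairwise (· ≥ ·) → M.Pairwise (· ≥ ·) →
    (∀ t : ℝ, t₀ ≤ t → L.countP (fun x => decide (t ≤ x)) ≤ M.countP (fun x => decide (t ≤ x))) →
    L.countP (fun x => decide (t₀ ≤ x)) < M.countP (fun x => decide (t₀ ≤ x)) →
    List.Lex (· < ·) L M
  | [], [], _, _, _, _, hs => by simp at hs
  | [], b :: M, hlen, _, _, _, _ => by simp at hlen
  | a :: L, [], hlen, _, _, _, _ => by simp at hlen
  | a :: L, b :: M, hlen, hL, hM, hcnt, hs => by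
    rcases le_or_gt t₀ a with ha | ha
    · have hb : a ≤ b := by
        by_contra hab
        push_neg at hab
        have h0 : (b :: M).countP (fun x => decide (a ≤ x)) = 0 := by
          rw [List.countP_eq_zero]
          intro x hx
          simp only [decide_eq_true_eq, not_le]
          rcases List.mem_cons.mp hx with rfl | hx
          · exact hab
          · exact lt_of_le_of_lt (List.rel_of_pairwise_cons hM hx) hab
        have h1 := hcnt a ha
        rw [h0, List.countP_cons_of_pos (by simp)] at h1
        omega
      rcases lt_or_eq_of_le hb with hb | rfl
      · exact List.Lex.rel hb
      · refine List.Lex.cons (lexR t₀ L M (by simpa using hlen) hL.of_cons hM.of_cons ?_ ?_)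
        · intro t ht
          have := hcnt t ht
          simp only [List.countP_cons] at this
          omega
        · have := hs
          simp only [List.countP_cons] at this
          omega
    · have h0 : (a :: L).countP (fun x => decide (t₀ ≤ x)) = 0 := by
        rw [List.countP_eq_zero]
        intro x hx
        simp only [decide_eq_true_eq, not_le]
        rcases List.mem_cons.mp hx with rfl | hx
        · exact ha
        · exact lt_of_le_of_lt (List.rel_of_pairwise_cons hL hx) ha
      rw [h0] at hs
      obtain ⟨x, hxm, hx⟩ := List.countP_pos_iff.mp hs
      simp only [decide_eq_true_eq] at hx
      have hb : t₀ ≤ b := by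
        rcases List.mem_cons.mp hxm with rfl | hxm
        · exact hx
        · exact le_trans hx (List.rel_of_pairwise_cons hM hxm)
      exact List.Lex.rel (lt_of_lt_of_le ha hb)

lemma lexP : ∀ (L M : List ℝ), L.length = M.length →
    L.Pairwise (· ≥ ·) → M.Pairwise (· ≥ ·) →
    (∀ t : ℝ, L.countP (fun x => decide (t ≤ x)) ≤ M.countP (fun x => decide (t ≤ x))) →
    L ≠ M → List.Lex (· < ·) L M
  | [], [], _, _, _, _, hne => absurd rfl hne
  | [], b :: M, hlen, _, _, _, _ => by simp at hlen
  | a :: L, [], hlen, _, _, _, _ => by simp at hlen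
  | a :: L, b :: M, hlen, hL, hM, hcnt, hne => by
    have hb : a ≤ b := by
      by_contra hab
      push_neg at hab
      have h0 : (b :: M).countP (fun x => decide (a ≤ x)) = 0 := by
        rw [List.countP_eq_zero]
        intro x hx
        simp only [decide_eq_true_eq, not_le]
        rcases List.mem_cons.mp hx with rfl | hx
        · exact hab
        · exact lt_of_le_of_lt (List.rel_of_pairwise_cons hM hx) hab
      have h1 := hcnt a
      rw [h0, List.countP_cons_of_pos (by simp)] at h1
      omega
    rcases lt_or_eq_of_le hb with hb | rfl
    · exact List.Lex.rel hb
    · refine List.Lex.cons (lexP L M (by simpa using hlen) hL.of_cons hM.of_cons ?_ ?_)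
      · intro t
        have := hcnt t
        simp only [List.countP_cons] at this
        omega
      · intro h; exact hne (by rw [h])


/-- A partition maximizing the lexicographic order of the non-increasingly sorted utility
sequence over all partitions is Pareto optimal, core stable and individually stable. -/
theorem stmt4 {α : Type*} [Fintype α] [DecidableEq α] [Nonempty α]
    (U : Finset α → ℝ) (hU : ∀ S : Finset α, 0 ≤ U S)
    (Cstar : α → Finset α) (hCstar : IsPartitionFn Cstar)
    (hmax : ∀ C : α → Finset α, IsPartitionFn C →
      ¬ List.Lex (· < ·) (psi U Cstar) (psi U C)) :
    ParetoOptimal U Cstar ∧ CoreStable U Cstar ∧ IndividuallyStable U Cstar := by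
  -- A common improvement principle: if moving to C' preserves the utility of every
  -- agent at level ≥ t₀ and pushes some agent from below t₀ to at least t₀, then
  -- psi strictly increases lexicographically, contradicting maximality.
  have key : ∀ (C' : α → Finset α), IsPartitionFn C' → ∀ t₀ : ℝ,
      (∀ x, t₀ ≤ U (Cstar x) → U (C' x) = U (Cstar x)) →
      (∃ i, U (Cstar i) < t₀ ∧ t₀ ≤ U (C' i)) → False := by
    rintro C' hC' t₀ h1 ⟨i, hi1, hi2⟩
    refine hmax C' hC' (lexR t₀ _ _ (by rw [psi_length, psi_length])
      (psi_sorted U Cstar) (psi_sorted U C') ?_ ?_)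
    · intro t ht
      rw [psi_countP, psi_countP]
      apply Finset.card_le_card
      intro x hx
      simp only [Finset.mem_filter, Finset.mem_univ, true_and] at hx ⊢
      rw [h1 x (le_trans ht hx)]
      exact hx
    · rw [psi_countP, psi_countP]
      apply Finset.card_lt_card
      have hsub : Finset.univ.filter (fun x => t₀ ≤ U (Cstar x)) ⊆
          Finset.univ.filter (fun x => t₀ ≤ U (C' x)) := by
        intro x hx
        simp only [Finset.mem_filter, Finset.mem_univ, true_and] at hx ⊢
        rw [h1 x hx]
        exact hx
      refine (Finset.ssubset_iff_of_subset hsub).mpr ⟨i, ?_, ?_⟩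
      · simp only [Finset.mem_filter, Finset.mem_univ, true_and]
        exact hi2
      · simp only [Finset.mem_filter, Finset.mem_univ, true_and, not_le]
        exact hi1
  refine ⟨?_, ?_, ?_⟩
  · -- Pareto optimal
    rintro ⟨C', hC', hdom, i, hi⟩
    refine hmax C' hC' (lexP _ _ (by rw [psi_length, psi_length])
      (psi_sorted U Cstar) (psi_sorted U C') ?_ ?_)
    · intro t
      rw [psi_countP, psi_countP]
      apply Finset.card_le_card
      intro x hx
      simp only [Finset.mem_filter, Finset.mem_univ, true_and] at hx ⊢
      exact le_trans hx (hdom x)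
    · intro h
      have hsum : (psi U Cstar).sum < (psi U C').sum := by
        rw [psi_sum, psi_sum]
        exact Finset.sum_lt_sum (fun j _ => hdom j) ⟨i, Finset.mem_univ i, hi⟩
      rw [h] at hsum
      exact lt_irrefl _ hsum
  · -- Core stable
    rintro ⟨S, hSne, hSblock⟩
    set C' : α → Finset α := fun x => if x ∈ S then S else Cstar x \ S with hC'def
    have hpart : IsPartitionFn C' := by
      constructor
      · intro x
        by_cases hx : x ∈ S
        · simp [hC'def, hx]
        · simp only [hC'def, if_neg hx, Finset.mem_sdiff]
          exact ⟨hCstar.1 x, hx⟩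
      · intro x y hxy
        by_cases hy : y ∈ S
        · simp only [hC'def, hy, if_true] at hxy ⊢
          simp [hxy]
        · simp only [hC'def, hy, if_false, Finset.mem_sdiff] at hxy
          obtain ⟨hx1, hx2⟩ := hxy
          simp only [hC'def, hx2, if_false, hy]
          rw [hCstar.2 x y hx1]
    refine key C' hpart (U S) ?_ ?_
    · intro x hx
      have hxS : x ∉ S := fun h => absurd hx (not_le.mpr (hSblock x h))
      have hdisj : Disjoint (Cstar x) S := by
        rw [Finset.disjoint_left]
        intro j hj hjS
        have := hCstar.2 j x hj
        exact absurd hx (not_le.mpr (this ▸ hSblock j hjS))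
      have : C' x = Cstar x := by
        simp only [hC'def, hxS, if_false]
        exact Finset.sdiff_eq_self_of_disjoint hdisj
      rw [this]
    · obtain ⟨i, hiS⟩ := hSne
      refine ⟨i, hSblock i hiS, ?_⟩
      simp [hC'def, hiS]
  · -- Individually stable
    rintro ⟨i, T, hiT, hT, hlt⟩
    set C' : α → Finset α := fun x => if x = i ∨ x ∈ T then insert i T else (Cstar x).erase i
      with hC'def
    have hTpart : ∀ x ∈ T, Cstar x = T := by
      intro x hx
      rcases hT with rfl | ⟨⟨j, hj⟩, _⟩
      · exact absurd hx (Finset.notMem_empty x)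
      · exact hj ▸ hCstar.2 x j (hj ▸ hx)
    have hpart : IsPartitionFn C' := by
      constructor
      · intro x
        by_cases hx : x = i ∨ x ∈ T
        · simp only [hC'def, hx, if_true]
          rcases hx with rfl | hx
          · exact Finset.mem_insert_self x T
          · exact Finset.mem_insert_of_mem hx
        · simp only [hC'def, hx, if_false, Finset.mem_erase]
          push_neg at hx
          exact ⟨hx.1, hCstar.1 x⟩
      · intro x y hxy
        by_cases hy : y = i ∨ y ∈ T
        · simp only [hC'def, hy, if_true] at hxy ⊢
          have hx : x = i ∨ x ∈ T := by
            rcases Finset.mem_insert.mp hxy with h | h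
            · exact Or.inl h
            · exact Or.inr h
          simp [hx]
        · simp only [hC'def, hy, if_false, Finset.mem_erase] at hxy
          obtain ⟨hx1, hx2⟩ := hxy
          have hx : ¬ (x = i ∨ x ∈ T) := by
            rintro (rfl | hxT)
            · exact hx1 rfl
            · have h1 : Cstar x = T := hTpart x hxT
              have h2 : Cstar x = Cstar y := hCstar.2 x y hx2
              have hyT : y ∈ T := by rw [← h1, h2]; exact hCstar.1 y
              exact hy (Or.inr hyT)
          simp only [hC'def, if_neg hx, if_neg hy]
          rw [hCstar.2 x y hx2]
    refine key C' hpart (U (insert i T)) ?_ ⟨i, hlt, ?_⟩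
    · intro x hx
      by_cases hxc : x = i ∨ x ∈ T
      · rcases hxc with rfl | hxT
        · exact absurd hx (not_le.mpr hlt)
        · have hCT : Cstar x = T := hTpart x hxT
          have hUT : U T ≤ U (insert i T) := by
            rcases hT with rfl | ⟨_, h⟩
            · exact absurd hxT (Finset.notMem_empty x)
            · exact h
          have heq : U T = U (insert i T) := le_antisymm hUT (hCT ▸ hx)
          have : C' x = insert i T := by simp [hC'def, hxT]
          rw [this, hCT, heq]
      · have hiCx : i ∉ Cstar x := by
          intro h
          have := hCstar.2 i x h
          exact absurd hx (not_le.mpr (this ▸ hlt))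
        have : C' x = Cstar x := by
          simp only [hC'def, hxc, if_false]
          exact Finset.erase_eq_of_notMem hiCx
        rw [this]
    · have : C' i = insert i T := by simp [hC'def]
      rw [this]
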